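/- The time average of the elliptic component of the Lagrangian descriptor converges: lim_{τ→∞} (1/(2τ)) M^e_γ(τ) = (2/π)(ωR)^γ B((γ+1)/2, 1/2), where B is the Beta function; in particular the limit depends only on the radius R of the circle traced by the bath mode, hence is constant on each periodic orbit. -/

import Mathlib

open Filter intervalIntegral

open MeasureTheory Real Set



lemma avg_tendsto {f : ℝ → ℝ} {T : ℝ} (hT : 0 < T) (hper : Function.Periodic f T)
    (hcont : Continuous f) :
    Tendsto (fun τ : ℝ => 1 / (2 * τ) * ∫ t in (-τ)..τ, f t) atTop
      (nhds ((∫ t in (0:ℝ)..T, f t) / T)) := by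
  set I : ℝ := ∫ t in (0:ℝ)..T, f t with hI
  set C : ℝ := ∫ t in (0:ℝ)..T, |f t| with hC
  have hint : ∀ a b : ℝ, IntervalIntegrable f volume a b := fun a b =>
    hcont.intervalIntegrable a b
  have habsper : Function.Periodic (fun t => |f t|) T := fun x => by simp [hper x]
  have habs : ∀ a b : ℝ, IntervalIntegrable (fun t => |f t|) volume a b := fun a b =>
    (hcont.abs).intervalIntegrable a b
  have key : ∀ τ : ℝ, 1 ≤ τ →
      dist (1 / (2 * τ) * ∫ t in (-τ)..τ, f t) (I / T) ≤ (C + |I|) / (2 * τ) := by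
    intro τ hτ
    have hτ0 : (0:ℝ) < 2 * τ := by linarith
    set m : ℤ := ⌊2 * τ / T⌋ with hm
    have hm1 : (m : ℝ) ≤ 2 * τ / T := Int.floor_le _
    have hm2 : 2 * τ / T < m + 1 := Int.lt_floor_add_one _
    have hmT : (m : ℝ) * T ≤ 2 * τ := by
      rw [← le_div_iff₀ hT]; exact hm1
    have hmT2 : 2 * τ ≤ (m : ℝ) * T + T := by
      have := (div_lt_iff₀ hT).mp hm2
      nlinarith
    have hsplit : (∫ t in (-τ)..τ, f t) =
        (∫ t in (-τ)..(-τ + m • T), f t) + ∫ t in (-τ + m • T)..τ, f t := by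
      rw [integral_add_adjacent_intervals (hint _ _) (hint _ _)]
    have hfirst : (∫ t in (-τ)..(-τ + m • T), f t) = m • I := by
      rw [hper.intervalIntegral_add_zsmul_eq m (-τ) hint, hI,
        hper.intervalIntegral_add_eq (-τ) 0, zero_add]
    have hsm : (m : ℝ) * T = m • T := by simp [zsmul_eq_mul]
    -- bound the remainder
    have hrem : |∫ t in (-τ + m • T)..τ, f t| ≤ C := by
      have hab : -τ + m • T ≤ τ := by rw [← hsm]; linarith
      have hab2 : τ ≤ (-τ + m • T) + T := by rw [← hsm]; linarith
      calc |∫ t in (-τ + m • T)..τ, f t| ≤ ∫ t in (-τ + m • T)..τ, |f t| :=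
            intervalIntegral.abs_integral_le_integral_abs hab
        _ ≤ ∫ t in (-τ + m • T)..((-τ + m • T) + T), |f t| := by
            apply intervalIntegral.integral_mono_interval (le_refl _) hab hab2
            · filter_upwards with x using abs_nonneg _
            · exact habs _ _
        _ = C := by
            rw [hC, (habsper).intervalIntegral_add_eq (-τ + m • T) 0, zero_add]
    have hmI : |(m : ℝ) * I - (2 * τ / T) * I| ≤ |I| := by
      have h1 : |(m : ℝ) - 2 * τ / T| ≤ 1 := by
        rw [abs_le]; constructor <;> nlinarith
      calc |(m : ℝ) * I - (2 * τ / T) * I| = |(m : ℝ) - 2 * τ / T| * |I| := by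
            rw [← abs_mul]; ring_nf
        _ ≤ 1 * |I| := by
            exact mul_le_mul_of_nonneg_right h1 (abs_nonneg _)
        _ = |I| := one_mul _
    rw [Real.dist_eq]
    have heq : 1 / (2 * τ) * (∫ t in (-τ)..τ, f t) - I / T =
        (1 / (2 * τ)) * ((∫ t in (-τ)..τ, f t) - (2 * τ / T) * I) := by
      field_simp
    rw [heq, abs_mul, abs_of_pos (by positivity : (0:ℝ) < 1 / (2*τ))]
    rw [div_eq_mul_inv (C + |I|), mul_comm (C + |I|), ← one_div]
    apply mul_le_mul_of_nonneg_left _ (by positivity)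
    calc |(∫ t in (-τ)..τ, f t) - (2 * τ / T) * I|
        = |((∫ t in (-τ + m • T)..τ, f t)) + ((m:ℝ) * I - (2 * τ / T) * I)| := by
          rw [hsplit, hfirst]; congr 1; push_cast [zsmul_eq_mul]; ring
      _ ≤ |∫ t in (-τ + m • T)..τ, f t| + |(m:ℝ) * I - (2 * τ / T) * I| := abs_add_le _ _
      _ ≤ C + |I| := add_le_add hrem hmI
  rw [tendsto_iff_dist_tendsto_zero]
  apply squeeze_zero' (Eventually.of_forall fun τ => dist_nonneg)
    (eventually_atTop.mpr ⟨1, key⟩)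
  have : Tendsto (fun τ : ℝ => 2 * τ) atTop atTop :=
    (tendsto_id.const_mul_atTop (by norm_num : (0:ℝ) < 2))
  exact Tendsto.div_atTop tendsto_const_nhds this



lemma realBeta {a b : ℝ} (ha : 0 < a) (hb : 0 < b) :
    Real.Gamma a * Real.Gamma b =
      Real.Gamma (a + b) * ∫ x in (0:ℝ)..1, x ^ (a-1) * (1-x) ^ (b-1) := by
  have h := Complex.Gamma_mul_Gamma_eq_betaIntegral
    (s := (a:ℂ)) (t := (b:ℂ)) (by simpa using ha) (by simpa using hb)
  have hbeta : Complex.betaIntegral (a:ℂ) (b:ℂ) =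
      ((∫ x in (0:ℝ)..1, x ^ (a-1) * (1-x) ^ (b-1) : ℝ) : ℂ) := by
    rw [Complex.betaIntegral, ← intervalIntegral.integral_ofReal]
    apply intervalIntegral.integral_congr
    intro x hx
    rw [Set.uIcc_of_le (by norm_num : (0:ℝ) ≤ 1)] at hx
    have hx0 : (0:ℝ) ≤ x := hx.1
    have hx1 : (0:ℝ) ≤ 1 - x := by linarith [hx.2]
    simp only []
    rw [Complex.ofReal_mul, Complex.ofReal_cpow hx0, Complex.ofReal_cpow hx1]
    push_cast
    ring
  rw [hbeta] at h
  apply Complex.ofReal_inj.mp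
  push_cast [← Complex.Gamma_ofReal]
  exact h



lemma sin_cov {γ : ℝ} (hγ0 : 0 < γ) :
    ∫ x in (0:ℝ)..1, x ^ ((γ-1)/2) * (1-x) ^ (-(1/2) : ℝ) =
      2 * ∫ t in (0:ℝ)..(π/2), Real.sin t ^ γ := by
  have hpi2 : (0:ℝ) < π / 2 := by positivity
  set g : ℝ → ℝ := fun x => x ^ ((γ-1)/2) * (1-x) ^ (-(1/2) : ℝ) with hg
  set f : ℝ → ℝ := fun t => sin t ^ 2 with hf
  have himg : f '' Ioo 0 (π/2) = Ioo (0:ℝ) 1 := by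
    ext x
    constructor
    · rintro ⟨t, ht, rfl⟩
      have hs : 0 < sin t := sin_pos_of_pos_of_lt_pi ht.1 (ht.2.trans (by linarith [pi_pos]))
      have hs1 : sin t < 1 := by
        have h := Real.sin_lt_sin_of_lt_of_le_pi_div_two
          (x := t) (y := π/2) (by linarith [ht.1, pi_pos]) le_rfl ht.2
        simpa using h
      refine ⟨by positivity, ?_⟩
      simp only [hf]
      nlinarith
    · rintro ⟨hx0, hx1⟩
      refine ⟨Real.arcsin (Real.sqrt x), ⟨?_, ?_⟩, ?_⟩
      · exact Real.arcsin_pos.mpr (Real.sqrt_pos.mpr hx0)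
      · exact Real.arcsin_lt_pi_div_two.mpr (by rw [Real.sqrt_lt' one_pos]; simpa using hx1)
      · have : sin (Real.arcsin (Real.sqrt x)) = Real.sqrt x :=
          Real.sin_arcsin (by linarith [Real.sqrt_nonneg x]) (Real.sqrt_le_one.mpr hx1.le)
        simp only [hf, this]
        rw [Real.sq_sqrt hx0.le]
  have hderiv : ∀ t ∈ Ioo (0:ℝ) (π/2),
      HasDerivWithinAt f (2 * sin t * cos t) (Ioo (0:ℝ) (π/2)) t := by
    intro t _
    have h := ((Real.hasDerivAt_sin t).pow 2).hasDerivWithinAt (s := Ioo (0:ℝ) (π/2))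
    have e : (2 * sin t * cos t) = ((2:ℕ):ℝ) * sin t ^ (2 - 1) * cos t := by norm_num
    rw [e]; exact h
  have hinj : InjOn f (Ioo 0 (π/2)) := by
    intro t1 h1 t2 h2 he
    have hs1 : 0 < sin t1 := sin_pos_of_pos_of_lt_pi h1.1 (h1.2.trans (by linarith [pi_pos]))
    have hs2 : 0 < sin t2 := sin_pos_of_pos_of_lt_pi h2.1 (h2.2.trans (by linarith [pi_pos]))
    have hsin : sin t1 = sin t2 := by
      simp only [hf] at he
      have h3 : sin t1 ≤ sin t2 := by nlinarith
      have h4 : sin t2 ≤ sin t1 := by nlinarith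
      linarith
    exact Real.injOn_sin ⟨by linarith [h1.1, pi_pos], h1.2.le⟩
      ⟨by linarith [h2.1, pi_pos], h2.2.le⟩ hsin
  have hcov := integral_image_eq_integral_abs_deriv_smul measurableSet_Ioo hderiv hinj g
  rw [himg] at hcov
  have hptwise : ∀ t ∈ Ioo (0:ℝ) (π/2),
      |2 * sin t * cos t| • g (f t) = 2 * sin t ^ γ := by
    intro t ht
    have hs : 0 < sin t := sin_pos_of_pos_of_lt_pi ht.1 (ht.2.trans (by linarith [pi_pos]))
    have hc : 0 < cos t := Real.cos_pos_of_mem_Ioo ⟨by linarith [ht.1, pi_pos], ht.2⟩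
    have h1 : (sin t ^ 2 : ℝ) ^ ((γ-1)/2) = sin t ^ (γ - 1) := by
      rw [← Real.rpow_natCast (sin t) 2, ← Real.rpow_mul hs.le]
      norm_num
      congr 1
      ring
    have h2 : ((1:ℝ) - sin t ^ 2) ^ (-(1/2) : ℝ) = (cos t)⁻¹ := by
      rw [← Real.cos_sq' t, ← Real.rpow_natCast (cos t) 2, ← Real.rpow_mul hc.le]
      norm_num [Real.rpow_neg_one]
    simp only [hf, hg, smul_eq_mul, h1, h2]
    rw [abs_of_pos (by positivity)]
    have h3 : sin t ^ (γ - 1) * sin t = sin t ^ γ := by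
      have he : γ - 1 + 1 = γ := by ring
      rw [← he, Real.rpow_add_one hs.ne']
      rw [he]
    field_simp
    nlinarith [h3]
  calc ∫ x in (0:ℝ)..1, g x = ∫ x in Ioo (0:ℝ) 1, g x := by
        rw [intervalIntegral.integral_of_le (by norm_num : (0:ℝ) ≤ 1),
          MeasureTheory.integral_Ioc_eq_integral_Ioo]
    _ = ∫ t in Ioo (0:ℝ) (π/2), |2 * sin t * cos t| • g (f t) := hcov
    _ = ∫ t in Ioo (0:ℝ) (π/2), 2 * sin t ^ γ :=
        MeasureTheory.setIntegral_congr_fun measurableSet_Ioo hptwise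
    _ = 2 * ∫ t in Ioo (0:ℝ) (π/2), sin t ^ γ := by
        rw [MeasureTheory.integral_const_mul]
    _ = 2 * ∫ t in (0:ℝ)..(π/2), sin t ^ γ := by
        rw [intervalIntegral.integral_of_le hpi2.le,
          MeasureTheory.integral_Ioc_eq_integral_Ioo]



section Aux

lemma my_rpow_cont {γ : ℝ} (hγ : 0 < γ) : Continuous (fun x : ℝ => |x| ^ γ) := by
  apply continuous_iff_continuousAt.mpr
  intro x
  exact (Real.continuousAt_rpow_const |x| γ (Or.inr hγ.le)).comp (continuous_abs.continuousAt)

lemma sin_period_int {γ : ℝ} (hγ : 0 < γ) :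
    ∫ s in (0:ℝ)..(2*π), |Real.sin s| ^ γ = 4 * ∫ t in (0:ℝ)..(π/2), Real.sin t ^ γ := by
  have hgc : Continuous (fun s : ℝ => |Real.sin s| ^ γ) :=
    (my_rpow_cont hγ).comp Real.continuous_sin
  have hint : ∀ a b : ℝ, IntervalIntegrable (fun s => |Real.sin s| ^ γ) volume a b :=
    fun a b => hgc.intervalIntegrable a b
  have hper : Function.Periodic (fun s : ℝ => |Real.sin s| ^ γ) π := by
    intro x; simp [Real.sin_add_pi]
  have h1 : (∫ s in (0:ℝ)..(2*π), |Real.sin s| ^ γ)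
      = (∫ s in (0:ℝ)..π, |Real.sin s| ^ γ) + ∫ s in π..(2*π), |Real.sin s| ^ γ := by
    rw [integral_add_adjacent_intervals (hint _ _) (hint _ _)]
  have h2 : (∫ s in π..(2*π), |Real.sin s| ^ γ) = ∫ s in (0:ℝ)..π, |Real.sin s| ^ γ := by
    have := hper.intervalIntegral_add_eq π 0
    rw [zero_add] at this
    rw [show (2*π) = π + π by ring, this]
  have h3 : (∫ s in (0:ℝ)..π, |Real.sin s| ^ γ)
      = (∫ s in (0:ℝ)..(π/2), |Real.sin s| ^ γ) + ∫ s in (π/2)..π, |Real.sin s| ^ γ := by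
    rw [integral_add_adjacent_intervals (hint _ _) (hint _ _)]
  have h4 : (∫ s in (π/2)..π, |Real.sin s| ^ γ) = ∫ s in (0:ℝ)..(π/2), |Real.sin s| ^ γ := by
    have := intervalIntegral.integral_comp_sub_left (a := (0:ℝ)) (b := π/2)
      (fun s => |Real.sin s| ^ γ) π
    rw [sub_zero, show π - π/2 = π/2 by ring] at this
    rw [← this]
    apply intervalIntegral.integral_congr
    intro x _
    simp [Real.sin_pi_sub]
  have h5 : (∫ s in (0:ℝ)..(π/2), |Real.sin s| ^ γ) = ∫ t in (0:ℝ)..(π/2), Real.sin t ^ γ := by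
    apply intervalIntegral.integral_congr
    intro x hx
    rw [Set.uIcc_of_le (by positivity : (0:ℝ) ≤ π/2)] at hx
    show |Real.sin x| ^ γ = Real.sin x ^ γ
    rw [abs_of_nonneg (Real.sin_nonneg_of_nonneg_of_le_pi hx.1 (by linarith [hx.2, pi_pos]))]
  rw [h1, h2, h3, h4, h5]; ring

lemma cos_period_int {γ : ℝ} (hγ : 0 < γ) :
    ∫ s in (0:ℝ)..(2*π), |Real.cos s| ^ γ = ∫ s in (0:ℝ)..(2*π), |Real.sin s| ^ γ := by
  have hper : Function.Periodic (fun s : ℝ => |Real.sin s| ^ γ) (2*π) := by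
    intro x; simp [Real.sin_add_two_pi]
  have h1 : (∫ s in (0:ℝ)..(2*π), |Real.cos s| ^ γ)
      = ∫ s in (0:ℝ)..(2*π), |Real.sin (s + π/2)| ^ γ := by
    apply intervalIntegral.integral_congr
    intro x _
    show |Real.cos x| ^ γ = |Real.sin (x + π/2)| ^ γ
    rw [Real.sin_add_pi_div_two]
  rw [h1, intervalIntegral.integral_comp_add_right (fun s => |Real.sin s| ^ γ) (π/2)]
  have := hper.intervalIntegral_add_eq (π/2) 0
  rw [zero_add] at this
  rw [show (2*π + π/2) = π/2 + 2*π by ring, zero_add, this]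

end Aux





section Helpers

lemma my_rpow_cont' {γ : ℝ} (hγ : 0 < γ) : Continuous (fun x : ℝ => |x| ^ γ) := by
  apply continuous_iff_continuousAt.mpr
  intro x
  exact (Real.continuousAt_rpow_const |x| γ (Or.inr hγ.le)).comp (continuous_abs.continuousAt)

end Helpers

theorem stmt_main (ω : ℝ) (hω : 0 < ω) (q0 p0 : ℝ) (R : ℝ)
    (hR : R = Real.sqrt (q0 ^ 2 + p0 ^ 2)) (hRpos : 0 < R)
    (γ : ℝ) (hγ0 : 0 < γ)
    (Me : ℝ → ℝ)
    (hMe : ∀ τ : ℝ, Me τ =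
      ∫ t in (-τ)..τ,
        (|ω * (p0 * Real.cos (ω * t) - q0 * Real.sin (ω * t))| ^ γ +
         |-(ω * (q0 * Real.cos (ω * t) + p0 * Real.sin (ω * t)))| ^ γ)) :
    Filter.Tendsto (fun τ : ℝ => 1 / (2 * τ) * Me τ) Filter.atTop
      (nhds ((ω * R) ^ γ * (4 / π) * ∫ t in (0:ℝ)..(π/2), Real.sin t ^ γ)) := by
  have hπ := Real.pi_pos
  have hωR : 0 < ω * R := by positivity
  -- polar decomposition
  have hsum : q0 ^ 2 + p0 ^ 2 = R ^ 2 := by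
    rw [hR]; exact (Real.sq_sqrt (by positivity)).symm
  set z : ℂ := (q0 : ℂ) + (p0 : ℂ) * Complex.I with hzdef
  have hzabs : ‖z‖ = R := by
    rw [hzdef, Complex.norm_add_mul_I, ← hR]
  have hz0 : z ≠ 0 := by
    intro h; rw [h] at hzabs; simp at hzabs; linarith
  set φ : ℝ := Complex.arg z with hφ
  have hre : z.re = q0 := by simp [hzdef]
  have him : z.im = p0 := by simp [hzdef]
  have hq : q0 = R * Real.cos φ := by
    rw [hφ, Complex.cos_arg hz0, hre, hzabs]; field_simp
  have hp : p0 = R * Real.sin φ := by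
    rw [hφ, Complex.sin_arg, him, hzabs]; field_simp
  -- the function f
  set f : ℝ → ℝ := fun t =>
    (ω * R) ^ γ * (|Real.sin (ω * t - φ)| ^ γ + |Real.cos (ω * t - φ)| ^ γ) with hfdef
  have hMef : ∀ τ : ℝ, Me τ = ∫ t in (-τ)..τ, f t := by
    intro τ
    rw [hMe τ]
    apply intervalIntegral.integral_congr
    intro t _
    show |ω * (p0 * Real.cos (ω*t) - q0 * Real.sin (ω*t))| ^ γ +
        |-(ω * (q0 * Real.cos (ω*t) + p0 * Real.sin (ω*t)))| ^ γ =
        (ω * R) ^ γ * (|Real.sin (ω * t - φ)| ^ γ + |Real.cos (ω * t - φ)| ^ γ)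
    have e1 : ω * (p0 * Real.cos (ω*t) - q0 * Real.sin (ω*t)) =
        -((ω*R) * Real.sin (ω*t - φ)) := by
      rw [hq, hp, Real.sin_sub]; ring
    have e2 : -(ω * (q0 * Real.cos (ω*t) + p0 * Real.sin (ω*t))) =
        -((ω*R) * Real.cos (ω*t - φ)) := by
      rw [hq, hp, Real.cos_sub]; ring
    rw [e1, e2, abs_neg, abs_neg, abs_mul (ω*R), abs_mul (ω*R), abs_of_pos hωR,
      Real.mul_rpow hωR.le (abs_nonneg _), Real.mul_rpow hωR.le (abs_nonneg _)]
    ring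
  -- continuity and periodicity of f
  have hcsin : Continuous (fun t : ℝ => |Real.sin (ω * t - φ)| ^ γ) :=
    (my_rpow_cont' hγ0).comp (Real.continuous_sin.comp ((continuous_const.mul continuous_id).sub continuous_const))
  have hccos : Continuous (fun t : ℝ => |Real.cos (ω * t - φ)| ^ γ) :=
    (my_rpow_cont' hγ0).comp (Real.continuous_cos.comp ((continuous_const.mul continuous_id).sub continuous_const))
  have hcont : Continuous f := by
    apply Continuous.mul continuous_const (hcsin.add hccos)
  have hT : (0:ℝ) < 2 * π / ω := by positivity
  have hper : Function.Periodic f (2 * π / ω) := by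
    intro x
    have harg : ω * (x + 2 * π / ω) - φ = (ω * x - φ) + 2 * π := by
      field_simp; ring
    simp only [hfdef, harg, Real.sin_add_two_pi, Real.cos_add_two_pi]
  -- value of the integral over one period
  set J : ℝ := ∫ t in (0:ℝ)..(π/2), Real.sin t ^ γ with hJ
  have hSsin : ∫ s in (0:ℝ)..(2*π), |Real.sin s| ^ γ = 4 * J := sin_period_int hγ0
  have hgs_per : Function.Periodic (fun s : ℝ => |Real.sin s| ^ γ) (2*π) := by
    intro x; simp [Real.sin_add_two_pi]
  have hgc_per : Function.Periodic (fun s : ℝ => |Real.cos s| ^ γ) (2*π) := by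
    intro x; simp [Real.cos_add_two_pi]
  have hshift : ∀ g : ℝ → ℝ, Function.Periodic g (2*π) →
      (∫ t in (0:ℝ)..(2*π/ω), g (ω * t - φ)) = ω⁻¹ * ∫ s in (0:ℝ)..(2*π), g s := by
    intro g hg
    have h1 := intervalIntegral.integral_comp_mul_sub g hω.ne' φ (a := 0) (b := 2*π/ω)
    rw [h1]
    have he : ω * (2*π/ω) - φ = -φ + 2*π := by field_simp; ring
    have he2 : ω * 0 - φ = -φ := by ring
    rw [he, he2, smul_eq_mul]
    congr 1
    have := hg.intervalIntegral_add_eq (-φ) 0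
    rw [zero_add] at this
    exact this
  have hint1 : ∀ a b : ℝ, IntervalIntegrable (fun t => |Real.sin (ω * t - φ)| ^ γ) volume a b :=
    fun a b => hcsin.intervalIntegrable a b
  have hint2 : ∀ a b : ℝ, IntervalIntegrable (fun t => |Real.cos (ω * t - φ)| ^ γ) volume a b :=
    fun a b => hccos.intervalIntegrable a b
  have hIval : (∫ t in (0:ℝ)..(2*π/ω), f t) = (ω * R) ^ γ * (8 * J / ω) := by
    have hsplit : (∫ t in (0:ℝ)..(2*π/ω), f t) = (ω * R) ^ γ *
        ((∫ t in (0:ℝ)..(2*π/ω), |Real.sin (ω * t - φ)| ^ γ) +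
         (∫ t in (0:ℝ)..(2*π/ω), |Real.cos (ω * t - φ)| ^ γ)) := by
      simp only [hfdef]
      rw [intervalIntegral.integral_const_mul,
        intervalIntegral.integral_add (hint1 _ _) (hint2 _ _)]
    rw [hsplit, hshift _ hgs_per, hshift _ hgc_per, cos_period_int hγ0, hSsin]
    field_simp
    ring
  -- conclude
  have htend := avg_tendsto hT hper hcont
  rw [hIval] at htend
  have hval : (ω * R) ^ γ * (8 * J / ω) / (2 * π / ω) =
      (ω * R) ^ γ * (4 / π) * J := by
    field_simp
    ring
  rw [hval] at htend
  simp only [hMef]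
  exact htend


/-- The time average of the elliptic component of the Lagrangian descriptor converges:
lim_{τ→∞} (1/(2τ)) M^e_γ(τ) = (2/π)(ωR)^γ B((γ+1)/2, 1/2), where
B(a,b) = Γ(a)Γ(b)/Γ(a+b) is the Beta function; the limit depends only on the radius R
of the circle traced by the bath mode, hence is constant on each periodic orbit. -/
theorem stmt_11 (ω : ℝ) (hω : 0 < ω) (q0 p0 : ℝ) (R : ℝ)
    (hR : R = Real.sqrt (q0 ^ 2 + p0 ^ 2))
    (γ : ℝ) (hγ : γ ∈ Set.Ioc (0 : ℝ) 1)
    (Me : ℝ → ℝ)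
    (hMe : ∀ τ : ℝ, Me τ =
      ∫ t in (-τ)..τ,
        (|ω * (p0 * Real.cos (ω * t) - q0 * Real.sin (ω * t))| ^ γ +
         |-(ω * (q0 * Real.cos (ω * t) + p0 * Real.sin (ω * t)))| ^ γ))
    (Beta : ℝ → ℝ → ℝ)
    (hBeta : ∀ a b : ℝ, Beta a b = Real.Gamma a * Real.Gamma b / Real.Gamma (a + b)) :
    Filter.Tendsto (fun τ : ℝ => 1 / (2 * τ) * Me τ) Filter.atTop
      (nhds (2 / Real.pi * (ω * R) ^ γ * Beta ((γ + 1) / 2) (1 / 2))) := by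
  obtain ⟨hγ0, hγ1⟩ := hγ
  have hπ := Real.pi_pos
  set J : ℝ := ∫ t in (0:ℝ)..(π/2), Real.sin t ^ γ with hJ
  have hBval : Beta ((γ+1)/2) (1/2) = 2 * J := by
    have ha : 0 < (γ+1)/2 := by linarith
    have hb : 0 < (1:ℝ)/2 := by norm_num
    have h := realBeta ha hb
    have hexp : (∫ x in (0:ℝ)..1, x ^ ((γ+1)/2 - 1) * (1-x) ^ ((1:ℝ)/2 - 1))
        = ∫ x in (0:ℝ)..1, x ^ ((γ-1)/2) * (1-x) ^ (-(1/2):ℝ) := by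
      norm_num [show (γ+1)/2 - 1 = (γ-1)/2 from by ring]
    rw [hexp, sin_cov hγ0] at h
    rw [hBeta, h]
    have hne : Real.Gamma ((γ+1)/2 + 1/2) ≠ 0 := (Real.Gamma_pos_of_pos (by linarith)).ne'
    exact mul_div_cancel_left₀ _ hne
  rcases eq_or_lt_of_le (hR ▸ Real.sqrt_nonneg _ : 0 ≤ R) with h0 | hRpos
  · -- R = 0
    have h2 : q0 ^ 2 + p0 ^ 2 = 0 := by
      have h1 : Real.sqrt (q0^2+p0^2) = 0 := by rw [← hR, ← h0]
      have := Real.sqrt_eq_zero'.mp h1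
      nlinarith [sq_nonneg q0, sq_nonneg p0]
    have hq0 : q0 = 0 := by nlinarith [sq_nonneg q0, sq_nonneg p0]
    have hp0 : p0 = 0 := by nlinarith [sq_nonneg q0, sq_nonneg p0]
    have hMe0 : ∀ τ : ℝ, Me τ = 0 := by
      intro τ
      rw [hMe τ]
      have : ∀ t : ℝ,
          |ω * (p0 * Real.cos (ω*t) - q0 * Real.sin (ω*t))| ^ γ +
          |-(ω * (q0 * Real.cos (ω*t) + p0 * Real.sin (ω*t)))| ^ γ = 0 := by
        intro t
        simp [hq0, hp0, Real.zero_rpow hγ0.ne']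
      simp only [this, intervalIntegral.integral_zero]
    have hval0 : 2 / Real.pi * (ω * R) ^ γ * Beta ((γ+1)/2) (1/2) = 0 := by
      rw [← h0]
      simp [Real.zero_rpow hγ0.ne']
    rw [hval0]
    have : (fun τ : ℝ => 1 / (2 * τ) * Me τ) = fun _ : ℝ => (0:ℝ) := by
      funext τ; rw [hMe0 τ, mul_zero]
    rw [this]
    exact tendsto_const_nhds
  · have h := stmt_main ω hω q0 p0 R hR hRpos γ hγ0 Me hMe
    have hv : (ω*R)^γ * (4/π) * J = 2 / Real.pi * (ω * R) ^ γ * Beta ((γ+1)/2) (1/2) := by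
      rw [hBval]; field_simp; ring
    rw [hv] at h
    exact h
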